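/- Let S be a set and F₂(S) the universal Coxeter group on S, i.e., the free product of copies of ℤ/2 indexed by S. Then every element g ∈ F₂(S) with g² = e and g ≠ e is conjugate in F₂(S) to the image of some generator s ∈ S. Consequently, the set of involutions of F₂(S) is exactly the union of the conjugacy classes of the generators. -/
import Mathlib

open Monoid

namespace UCGaux

lemma zmod2_inv : ∀ x : Multiplicative (ZMod 2), x⁻¹ = x := by decide

lemma zmod2_eq : ∀ x : Multiplicative (ZMod 2), x ≠ 1 →
    x = Multiplicative.ofAdd 1 := by decide

open Monoid.CoprodI

variable {S : Type*}

/-- the letter-to-group map -/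
def f (x : Σ _ : S, Multiplicative (ZMod 2)) :
    CoprodI (fun _ : S => Multiplicative (ZMod 2)) :=
  CoprodI.of (i := x.1) x.2

lemma f_inv (x : Σ _ : S, Multiplicative (ZMod 2)) : (f x)⁻¹ = f x := by
  rw [f, ← map_inv, zmod2_inv]

/-- Reverse of a nonempty word over the ZMod 2 factors. -/
def rev : ∀ {i j : S},
    NeWord (fun _ : S => Multiplicative (ZMod 2)) i j →
    NeWord (fun _ : S => Multiplicative (ZMod 2)) j i
  | _, _, .singleton x h => .singleton x h
  | _, _, .append w₁ hne w₂ => .append (rev w₂) hne.symm (rev w₁)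

lemma rev_prod : ∀ {i j : S}
    (w : NeWord (fun _ : S => Multiplicative (ZMod 2)) i j),
    (rev w).prod = w.prod⁻¹
  | _, _, .singleton x h => by
      simp only [rev, NeWord.prod_singleton, ← map_inv, zmod2_inv]
  | _, _, .append w₁ hne w₂ => by
      simp [rev, rev_prod w₁, rev_prod w₂, mul_inv_rev]

lemma rev_toList : ∀ {i j : S}
    (w : NeWord (fun _ : S => Multiplicative (ZMod 2)) i j),
    (rev w).toList = w.toList.reverse
  | _, _, .singleton x h => by simp [rev]
  | _, _, .append w₁ hne w₂ => by
      simp [rev, rev_toList w₁, rev_toList w₂]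

lemma prod_reverse (t : List (Σ _ : S, Multiplicative (ZMod 2))) :
    (t.reverse.map f).prod = ((t.map f).prod)⁻¹ := by
  induction t with
  | nil => simp
  | cons x t ih =>
      simp only [List.reverse_cons, List.map_append, List.map_cons, List.map_nil,
        List.prod_append, List.prod_cons, List.prod_nil, mul_one, ih, mul_inv_rev]
      rw [f_inv]

lemma main (g : CoprodI (fun _ : S => Multiplicative (ZMod 2)))
    (hsq : g * g = 1) (hne : g ≠ 1) :
    ∃ (s : S) (k : CoprodI (fun _ : S => Multiplicative (ZMod 2))),
      g = k * CoprodI.of (i := s) (Multiplicative.ofAdd (1 : ZMod 2)) * k⁻¹ := by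
  letI : DecidableEq S := Classical.decEq S
  have hginv : g⁻¹ = g := inv_eq_of_mul_eq_one_right hsq
  have hwp : (Word.equiv g).prod = g := Word.equiv.symm_apply_apply g
  have hwe : (Word.equiv g) ≠ Word.empty := by
    intro h
    exact hne (by rw [← hwp, h, Word.prod_empty])
  obtain ⟨i, j, w', hw'⟩ := NeWord.of_word (Word.equiv g) hwe
  have hprod : w'.prod = g := by unfold NeWord.prod; rw [hw']; exact hwp
  -- palindrome
  have hrevprod : (rev w').prod = w'.prod := by
    rw [rev_prod, hprod, hginv]
  have hrevword : (rev w').toWord = w'.toWord :=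
    (Word.equiv.symm.injective : Function.Injective
      (Word.prod : Word (fun _ : S => Multiplicative (ZMod 2)) → _)) hrevprod
  have hpal : w'.toList.reverse = w'.toList := by
    have := congrArg Word.toList hrevword
    rwa [show (rev w').toWord.toList = (rev w').toList from rfl,
      show w'.toWord.toList = w'.toList from rfl, rev_toList] at this
  set l := w'.toList with hl
  have hnil : l ≠ [] := w'.toList_ne_nil
  have hchain : l.Chain' fun a b => a.1 ≠ b.1 := w'.toWord.chain_ne
  have hone : ∀ x ∈ l, x.2 ≠ 1 := w'.toWord.ne_one
  have hglist : g = (l.map f).prod := by rw [← hprod]; rfl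
  rcases Nat.even_or_odd l.length with ⟨m, hm⟩ | ⟨m, hm⟩
  · -- even length: impossible
    exfalso
    have hsplit : l.take m ++ l.drop m = l := List.take_append_drop m l
    have hlen1 : (l.take m).length = m := by
      rw [List.length_take]; omega
    have hrev : (l.drop m).reverse ++ (l.take m).reverse = l := by
      rw [← List.reverse_append, hsplit, hpal]
    have heq := List.append_inj (hsplit.trans hrev.symm)
      (by rw [hlen1, List.length_reverse, List.length_drop]; omega)
    have hm0 : m ≠ 0 := by
      intro h
      subst h
      exact hnil (by simpa using hm)
    have hchain2 : (l.take m ++ (l.take m).reverse).Chain' fun a b => a.1 ≠ b.1 := by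
      rw [← heq.2, hsplit]; exact hchain
    have hne' : l.take m ≠ [] := by
      intro h; apply hm0; rw [← hlen1, h]; rfl
    obtain ⟨x, hx⟩ := Option.isSome_iff_exists.mp (List.getLast?_isSome.mpr hne')
    have := (List.isChain_append.mp hchain2).2.2 x hx x
      (by rw [List.head?_reverse]; exact hx)
    exact this rfl
  · -- odd length
    have hmlt : m < l.length := by omega
    have hdrop : l.drop m = l[m] :: l.drop (m + 1) :=
      List.drop_eq_getElem_cons hmlt
    have hsplit : l.take m ++ l[m] :: l.drop (m + 1) = l := by
      rw [← hdrop]; exact List.take_append_drop m l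
    have hlen1 : (l.take m).length = m := by
      rw [List.length_take]; omega
    have hrev : (l.drop (m+1)).reverse ++ l[m] :: (l.take m).reverse = l := by
      have : (l.take m ++ l[m] :: l.drop (m + 1)).reverse
          = (l.drop (m+1)).reverse ++ l[m] :: (l.take m).reverse := by
        simp
      rw [← this, hsplit, hpal]
    have heq := List.append_inj (hsplit.trans hrev.symm)
      (by rw [hlen1, List.length_reverse, List.length_drop]; omega)
    have hb : l.drop (m+1) = (l.take m).reverse := by
      have := heq.2
      rw [List.cons.injEq] at this
      exact this.2
    have hmid : l[m].snd = Multiplicative.ofAdd (1 : ZMod 2) :=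
      zmod2_eq _ (hone _ (l.getElem_mem hmlt))
    set a := l.take m with ha
    set c := l[m] with hc
    have hsplit2 : a ++ c :: a.reverse = l := by rw [← hb]; exact hsplit
    rw [← hsplit2] at hglist
    refine ⟨c.1, (a.map f).prod, ?_⟩
    have hfc : f c = CoprodI.of (i := c.1) (Multiplicative.ofAdd (1 : ZMod 2)) := by
      unfold f; rw [hmid]
    rw [hglist, List.map_append, List.prod_append, List.map_cons, List.prod_cons,
      prod_reverse, hfc, ← mul_assoc]


end UCGaux

open Monoid

/-- In the universal Coxeter group `F₂(S)` on a set `S` (the free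
product of copies of `ℤ/2` indexed by `S`), every involution is conjugate to a
generator; consequently the set of involutions is the union of the conjugacy
classes of the generators. -/
theorem involutions_of_universalCoxeterGroup (S : Type*) :
    (∀ g : CoprodI (fun _ : S => Multiplicative (ZMod 2)),
      g * g = 1 → g ≠ 1 →
        ∃ (s : S) (k : CoprodI (fun _ : S => Multiplicative (ZMod 2))),
          g = k * CoprodI.of (i := s) (Multiplicative.ofAdd (1 : ZMod 2)) * k⁻¹) ∧
    ({g : CoprodI (fun _ : S => Multiplicative (ZMod 2)) | g * g = 1 ∧ g ≠ 1} =
      ⋃ s : S, {g | ∃ k, g = k * CoprodI.of (i := s) (Multiplicative.ofAdd (1 : ZMod 2)) * k⁻¹}) := by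
  have hσ : ∀ s : S,
      CoprodI.of (M := fun _ : S => Multiplicative (ZMod 2)) (i := s) (Multiplicative.ofAdd (1 : ZMod 2)) *
        CoprodI.of (M := fun _ : S => Multiplicative (ZMod 2)) (i := s) (Multiplicative.ofAdd (1 : ZMod 2)) = 1 := by
    intro s
    rw [← map_mul, show (Multiplicative.ofAdd (1 : ZMod 2)) *
      Multiplicative.ofAdd (1 : ZMod 2) = 1 by decide, map_one]
  have hσne : ∀ s : S,
      CoprodI.of (M := fun _ : S => Multiplicative (ZMod 2)) (i := s) (Multiplicative.ofAdd (1 : ZMod 2)) ≠ 1 := by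
    intro s h
    have h1 : CoprodI.of (M := fun _ : S => Multiplicative (ZMod 2)) (i := s) (Multiplicative.ofAdd (1 : ZMod 2)) =
        CoprodI.of (M := fun _ : S => Multiplicative (ZMod 2)) (i := s) (1 : Multiplicative (ZMod 2)) := by rw [h, map_one]
    have := CoprodI.of_injective (M := fun _ : S => Multiplicative (ZMod 2)) s h1
    exact (by decide : Multiplicative.ofAdd (1 : ZMod 2) ≠ (1 : Multiplicative (ZMod 2))) this
  refine ⟨fun g h1 h2 => UCGaux.main g h1 h2, ?_⟩
  ext g
  simp only [Set.mem_setOf_eq, Set.mem_iUnion]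
  constructor
  · rintro ⟨h1, h2⟩
    exact UCGaux.main g h1 h2
  · rintro ⟨s, k, rfl⟩
    constructor
    · calc k * CoprodI.of (M := fun _ : S => Multiplicative (ZMod 2)) (i := s) (Multiplicative.ofAdd (1 : ZMod 2)) * k⁻¹ *
          (k * CoprodI.of (M := fun _ : S => Multiplicative (ZMod 2)) (i := s) (Multiplicative.ofAdd (1 : ZMod 2)) * k⁻¹)
          = k * (CoprodI.of (M := fun _ : S => Multiplicative (ZMod 2)) (i := s) (Multiplicative.ofAdd (1 : ZMod 2)) *
            CoprodI.of (M := fun _ : S => Multiplicative (ZMod 2)) (i := s) (Multiplicative.ofAdd (1 : ZMod 2))) * k⁻¹ := by group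
        _ = 1 := by rw [hσ s]; group
    · intro h
      apply hσne s
      have : CoprodI.of (M := fun _ : S => Multiplicative (ZMod 2)) (i := s) (Multiplicative.ofAdd (1 : ZMod 2)) =
          k⁻¹ * (k * CoprodI.of (M := fun _ : S => Multiplicative (ZMod 2)) (i := s) (Multiplicative.ofAdd (1 : ZMod 2)) * k⁻¹) * k := by
        group
      rw [this, h]
      group
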